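/- For an edge sequence b : ℤ → {0,1} with shape γ, the partition γ contains a box with hook length exactly r if and only if there exists an index k with b(k) = 1 and b(k+r) = 0. -/
import Mathlib


/-- An *edge sequence*: a predicate on `ℤ` (`True` = a `1`, `False` = a `0`),
eventually `1` in one direction and eventually `0` in the other. -/
def IsEdgeSeq (b : ℤ → Prop) : Prop :=
  (∃ N : ℤ, ∀ i : ℤ, N ≤ i → b i) ∧ (∃ N : ℤ, ∀ i : ℤ, i ≤ N → ¬ b i)

/-- The number of `0`'s of the edge sequence lying above position `j`. -/
noncomputable def numZerosAbove (b : ℤ → Prop) (j : ℤ) : ℕ :=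
  Nat.card {i : ℤ // j < i ∧ ¬ b i}

/-- The shape of an edge sequence: for each `0` of `b` the corresponding part is
the number of `1`'s below it; equivalently, the `(k+1)`-st largest part counts the
`1`'s of `b` with at least `k+1` `0`'s beyond them. -/
noncomputable def esShape (b : ℤ → Prop) (k : ℕ) : ℕ :=
  Nat.card {j : ℤ // b j ∧ k + 1 ≤ numZerosAbove b j}

/-- The `j`-th part of the conjugate partition of `f` (`j ≥ 1`). -/
noncomputable def conjCount (f : ℕ → ℕ) (j : ℕ) : ℕ :=
  Nat.card {i : ℕ // j ≤ f i}

/-- The partition `f` has a box of hook length `n`. -/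
def HasHook (f : ℕ → ℕ) (n : ℕ) : Prop :=
  ∃ a j : ℕ, 1 ≤ j ∧ j ≤ f a ∧ (f a - j) + (conjCount f j - (a + 1)) + 1 = n

/- ### Auxiliary material -/

/-- The number of `1`'s of the edge sequence lying below position `j`. -/
noncomputable def numOnesBelow (b : ℤ → Prop) (j : ℤ) : ℕ :=
  Nat.card {i : ℤ // i < j ∧ b i}

section Aux

variable {b : ℤ → Prop} (hb : IsEdgeSeq b)

lemma z_def (b : ℤ → Prop) (j : ℤ) :
    numZerosAbove b j = {i : ℤ | j < i ∧ ¬ b i}.ncard :=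
  Nat.card_coe_set_eq _

lemma o_def (b : ℤ → Prop) (j : ℤ) :
    numOnesBelow b j = {i : ℤ | i < j ∧ b i}.ncard :=
  Nat.card_coe_set_eq _

lemma esShape_def (b : ℤ → Prop) (k : ℕ) :
    esShape b k = {j : ℤ | b j ∧ k + 1 ≤ numZerosAbove b j}.ncard :=
  Nat.card_coe_set_eq _

include hb

lemma finZ (j : ℤ) : {i : ℤ | j < i ∧ ¬ b i}.Finite := by
  obtain ⟨N, hN⟩ := hb.1
  refine (Set.finite_Ioo j N).subset ?_
  rintro i ⟨h1, h2⟩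
  exact ⟨h1, by by_contra h; exact h2 (hN i (le_of_not_gt h))⟩

lemma finO (j : ℤ) : {i : ℤ | i < j ∧ b i}.Finite := by
  obtain ⟨M, hM⟩ := hb.2
  refine (Set.finite_Ioo M j).subset ?_
  rintro i ⟨h1, h2⟩
  exact ⟨by by_contra h; exact hM i (le_of_not_gt h) h2, h1⟩

lemma z_anti {i j : ℤ} (h : i ≤ j) : numZerosAbove b j ≤ numZerosAbove b i := by
  rw [z_def, z_def]
  exact Set.ncard_le_ncard (fun x hx => ⟨lt_of_le_of_lt h hx.1, hx.2⟩) (finZ hb i)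

lemma o_mono {i j : ℤ} (h : i ≤ j) : numOnesBelow b i ≤ numOnesBelow b j := by
  rw [o_def, o_def]
  exact Set.ncard_le_ncard (fun x hx => ⟨lt_of_lt_of_le hx.1 h, hx.2⟩) (finO hb j)

lemma z_succ_le {q p : ℤ} (hlt : q < p) (hp : ¬ b p) :
    numZerosAbove b p + 1 ≤ numZerosAbove b q := by
  rw [z_def, z_def]
  have h1 : insert p {i : ℤ | p < i ∧ ¬ b i} ⊆ {i : ℤ | q < i ∧ ¬ b i} := by
    rintro i (rfl | ⟨h3, h4⟩)
    · exact ⟨hlt, hp⟩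
    · exact ⟨hlt.trans h3, h4⟩
  calc {i : ℤ | p < i ∧ ¬ b i}.ncard + 1
      = (insert p {i : ℤ | p < i ∧ ¬ b i}).ncard := by
        rw [Set.ncard_insert_of_notMem (by simp) (finZ hb p)]
    _ ≤ {i : ℤ | q < i ∧ ¬ b i}.ncard := Set.ncard_le_ncard h1 (finZ hb q)

lemma o_succ_le {q p : ℤ} (hlt : q < p) (hq : b q) :
    numOnesBelow b q + 1 ≤ numOnesBelow b p := by
  rw [o_def, o_def]
  have h1 : insert q {i : ℤ | i < q ∧ b i} ⊆ {i : ℤ | i < p ∧ b i} := by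
    rintro i (rfl | ⟨h3, h4⟩)
    · exact ⟨hlt, hq⟩
    · exact ⟨h3.trans hlt, h4⟩
  calc {i : ℤ | i < q ∧ b i}.ncard + 1
      = (insert q {i : ℤ | i < q ∧ b i}).ncard := by
        rw [Set.ncard_insert_of_notMem (by simp) (finO hb q)]
    _ ≤ {i : ℤ | i < p ∧ b i}.ncard := Set.ncard_le_ncard h1 (finO hb p)

lemma lt_iff_z {p : ℤ} (hp : ¬ b p) (q : ℤ) :
    q < p ↔ numZerosAbove b p + 1 ≤ numZerosAbove b q := by
  constructor
  · exact fun h => z_succ_le hb h hp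
  · intro h
    by_contra hc
    push_neg at hc
    have := z_anti hb hc
    omega

lemma lt_iff_o {q : ℤ} (hq : b q) (p : ℤ) :
    q < p ↔ numOnesBelow b q + 1 ≤ numOnesBelow b p := by
  constructor
  · exact fun h => o_succ_le hb h hq
  · intro h
    by_contra hc
    push_neg at hc
    have := o_mono hb hc
    omega

lemma z_injOn {p p' : ℤ} (hp : ¬ b p) (hp' : ¬ b p')
    (h : numZerosAbove b p = numZerosAbove b p') : p = p' := by
  rcases lt_trichotomy p p' with h1 | h1 | h1
  · have := z_succ_le hb h1 hp'; omega
  · exact h1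
  · have := z_succ_le hb h1 hp; omega

lemma exists_zero (a : ℕ) : ∃ p : ℤ, ¬ b p ∧ numZerosAbove b p = a := by
  induction a with
  | zero =>
    obtain ⟨N, hN⟩ := hb.1
    obtain ⟨M, hM⟩ := hb.2
    obtain ⟨p, hp, hmax⟩ := Int.exists_greatest_of_bdd (P := fun i : ℤ => ¬ b i)
      ⟨N, fun z hz => by by_contra h; exact hz (hN z (le_of_not_ge h))⟩
      ⟨M, hM M le_rfl⟩
    refine ⟨p, hp, ?_⟩
    rw [z_def]
    have : {i : ℤ | p < i ∧ ¬ b i} = ∅ := by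
      ext i
      simp only [Set.mem_setOf_eq, Set.mem_empty_iff_false, iff_false, not_and]
      intro h1 h2
      exact absurd (hmax i h2) (not_le.2 h1)
    rw [this, Set.ncard_empty]
  | succ a ih =>
    obtain ⟨p, hp, hz⟩ := ih
    obtain ⟨M, hM⟩ := hb.2
    obtain ⟨p', hp', hmax⟩ := Int.exists_greatest_of_bdd (P := fun i : ℤ => i < p ∧ ¬ b i)
      ⟨p, fun z hz => le_of_lt hz.1⟩
      ⟨min M (p - 1), by
        constructor
        · have := min_le_right M (p - 1); omega
        · exact hM _ (min_le_left _ _)⟩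
    refine ⟨p', hp'.2, ?_⟩
    have hset : {i : ℤ | p' < i ∧ ¬ b i} = insert p {i : ℤ | p < i ∧ ¬ b i} := by
      ext i
      simp only [Set.mem_setOf_eq, Set.mem_insert_iff]
      constructor
      · rintro ⟨h1, h2⟩
        rcases lt_trichotomy p i with h3 | h3 | h3
        · exact Or.inr ⟨h3, h2⟩
        · exact Or.inl h3.symm
        · exact absurd (hmax i ⟨h3, h2⟩) (not_le.2 h1)
      · rintro (rfl | ⟨h1, h2⟩)
        · exact ⟨hp'.1, hp⟩
        · exact ⟨hp'.1.trans h1, h2⟩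
    rw [z_def, hset, Set.ncard_insert_of_notMem (by simp) (finZ hb p), ← z_def, hz]

lemma exists_one (m : ℕ) : ∃ q : ℤ, b q ∧ numOnesBelow b q = m := by
  induction m with
  | zero =>
    obtain ⟨N, hN⟩ := hb.1
    obtain ⟨M, hM⟩ := hb.2
    obtain ⟨q, hq, hmin⟩ := Int.exists_least_of_bdd (P := fun i : ℤ => b i)
      ⟨M + 1, fun z hz => by by_contra h; exact hM z (by omega) hz⟩
      ⟨N, hN N le_rfl⟩
    refine ⟨q, hq, ?_⟩
    rw [o_def]
    have : {i : ℤ | i < q ∧ b i} = ∅ := by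
      ext i
      simp only [Set.mem_setOf_eq, Set.mem_empty_iff_false, iff_false, not_and]
      intro h1 h2
      exact absurd (hmin i h2) (not_le.2 h1)
    rw [this, Set.ncard_empty]
  | succ m ih =>
    obtain ⟨q, hq, ho⟩ := ih
    obtain ⟨N, hN⟩ := hb.1
    obtain ⟨q', hq', hmin⟩ := Int.exists_least_of_bdd (P := fun i : ℤ => q < i ∧ b i)
      ⟨q + 1, fun z hz => by omega⟩
      ⟨max N (q + 1), by
        constructor
        · have := le_max_right N (q + 1); omega
        · exact hN _ (le_max_left _ _)⟩
    refine ⟨q', hq'.2, ?_⟩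
    have hset : {i : ℤ | i < q' ∧ b i} = insert q {i : ℤ | i < q ∧ b i} := by
      ext i
      simp only [Set.mem_setOf_eq, Set.mem_insert_iff]
      constructor
      · rintro ⟨h1, h2⟩
        rcases lt_trichotomy i q with h3 | h3 | h3
        · exact Or.inr ⟨h3, h2⟩
        · exact Or.inl h3
        · exact absurd (hmin i ⟨h3, h2⟩) (not_le.2 h1)
      · rintro (rfl | ⟨h1, h2⟩)
        · exact ⟨hq'.1, hq⟩
        · exact ⟨h1.trans hq'.1, h2⟩
    rw [o_def, hset, Set.ncard_insert_of_notMem (by simp) (finO hb q), ← o_def, ho]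

lemma shape_eq {p : ℤ} (hp : ¬ b p) :
    esShape b (numZerosAbove b p) = numOnesBelow b p := by
  rw [esShape_def, o_def]
  congr 1
  ext j
  simp only [Set.mem_setOf_eq]
  constructor
  · rintro ⟨h1, h2⟩
    exact ⟨(lt_iff_z hb hp j).2 h2, h1⟩
  · rintro ⟨h1, h2⟩
    exact ⟨h2, z_succ_le hb h1 hp⟩

lemma conj_eq {q : ℤ} (hq : b q) :
    conjCount (esShape b) (numOnesBelow b q + 1) = numZerosAbove b q := by
  classical
  set j := numOnesBelow b q + 1 with hj
  have key : ∀ a : ℕ, ∀ p : ℤ, ¬ b p → numZerosAbove b p = a →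
      (j ≤ esShape b a ↔ q < p) := by
    intro a p hp hz
    have hsh : esShape b a = numOnesBelow b p := by
      rw [← hz]; exact shape_eq hb hp
    rw [hsh, hj]
    exact (lt_iff_o hb hq p).symm
  let f : {a : ℕ // j ≤ esShape b a} → {i : ℤ // q < i ∧ ¬ b i} := fun a =>
    ⟨(exists_zero hb a.1).choose,
      (key a.1 _ (exists_zero hb a.1).choose_spec.1 (exists_zero hb a.1).choose_spec.2).1 a.2,
      (exists_zero hb a.1).choose_spec.1⟩
  have hbij : Function.Bijective f := by
    constructor
    · rintro ⟨a, ha⟩ ⟨a', ha'⟩ h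
      have h1 := (exists_zero hb a).choose_spec.2
      have h2 := (exists_zero hb a').choose_spec.2
      ext
      show a = a'
      rw [← h1, ← h2]
      exact congrArg (numZerosAbove b) (congrArg Subtype.val h)
    · rintro ⟨p, hqp, hp⟩
      refine ⟨⟨numZerosAbove b p, (key _ p hp rfl).2 hqp⟩, ?_⟩
      have h1 := (exists_zero hb (numZerosAbove b p)).choose_spec
      ext
      exact z_injOn hb h1.1 hp h1.2
  exact Nat.card_eq_of_bijective f hbij

lemma gap {q p : ℤ} (hq : b q) (hp : ¬ b p) (hlt : q < p) :
    (numOnesBelow b p - (numOnesBelow b q + 1)) +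
      (numZerosAbove b q - (numZerosAbove b p + 1)) + 1 = (p - q).toNat := by
  classical
  have finBoth : (Set.Ioo q p).Finite := Set.finite_Ioo q p
  have finOn : {i : ℤ | q < i ∧ i < p ∧ b i}.Finite :=
    finBoth.subset (fun i hi => ⟨hi.1, hi.2.1⟩)
  have finZn : {i : ℤ | q < i ∧ i < p ∧ ¬ b i}.Finite :=
    finBoth.subset (fun i hi => ⟨hi.1, hi.2.1⟩)
  have h1 : numOnesBelow b p =
      numOnesBelow b q + 1 + {i : ℤ | q < i ∧ i < p ∧ b i}.ncard := by
    have hset : {i : ℤ | i < p ∧ b i} =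
        insert q ({i : ℤ | i < q ∧ b i} ∪ {i : ℤ | q < i ∧ i < p ∧ b i}) := by
      ext i
      simp only [Set.mem_setOf_eq, Set.mem_insert_iff, Set.mem_union]
      constructor
      · rintro ⟨h1, h2⟩
        rcases lt_trichotomy i q with h3 | h3 | h3
        · exact Or.inr (Or.inl ⟨h3, h2⟩)
        · exact Or.inl h3
        · exact Or.inr (Or.inr ⟨h3, h1, h2⟩)
      · rintro (rfl | ⟨h3, h4⟩ | ⟨h3, h4, h5⟩)
        · exact ⟨hlt, hq⟩
        · exact ⟨h3.trans hlt, h4⟩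
        · exact ⟨h4, h5⟩
    have hdisj : Disjoint {i : ℤ | i < q ∧ b i} {i : ℤ | q < i ∧ i < p ∧ b i} := by
      rw [Set.disjoint_left]
      rintro i ⟨h1, _⟩ ⟨h2, _⟩
      omega
    rw [o_def, o_def, hset,
      Set.ncard_insert_of_notMem (by simp) ((finO hb q).union finOn),
      Set.ncard_union_eq hdisj (finO hb q) finOn]
    ring
  have h2 : numZerosAbove b q =
      numZerosAbove b p + 1 + {i : ℤ | q < i ∧ i < p ∧ ¬ b i}.ncard := by
    have hset : {i : ℤ | q < i ∧ ¬ b i} =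
        insert p ({i : ℤ | p < i ∧ ¬ b i} ∪ {i : ℤ | q < i ∧ i < p ∧ ¬ b i}) := by
      ext i
      simp only [Set.mem_setOf_eq, Set.mem_insert_iff, Set.mem_union]
      constructor
      · rintro ⟨h1, h2⟩
        rcases lt_trichotomy i p with h3 | h3 | h3
        · exact Or.inr (Or.inr ⟨h1, h3, h2⟩)
        · exact Or.inl h3
        · exact Or.inr (Or.inl ⟨h3, h2⟩)
      · rintro (rfl | ⟨h3, h4⟩ | ⟨h3, h4, h5⟩)
        · exact ⟨hlt, hp⟩
        · exact ⟨hlt.trans h3, h4⟩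
        · exact ⟨h3, h5⟩
    have hdisj : Disjoint {i : ℤ | p < i ∧ ¬ b i} {i : ℤ | q < i ∧ i < p ∧ ¬ b i} := by
      rw [Set.disjoint_left]
      rintro i ⟨h1, _⟩ ⟨_, h2, _⟩
      omega
    rw [z_def, z_def, hset,
      Set.ncard_insert_of_notMem (by simp) ((finZ hb p).union finZn),
      Set.ncard_union_eq hdisj (finZ hb p) finZn]
    ring
  have h3 : {i : ℤ | q < i ∧ i < p ∧ b i}.ncard +
      {i : ℤ | q < i ∧ i < p ∧ ¬ b i}.ncard = (p - q - 1).toNat := by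
    have hdisj : Disjoint {i : ℤ | q < i ∧ i < p ∧ b i} {i : ℤ | q < i ∧ i < p ∧ ¬ b i} := by
      rw [Set.disjoint_left]
      rintro i ⟨_, _, h1⟩ ⟨_, _, h2⟩
      exact h2 h1
    have hset : {i : ℤ | q < i ∧ i < p ∧ b i} ∪ {i : ℤ | q < i ∧ i < p ∧ ¬ b i} =
        Set.Ioo q p := by
      ext i
      simp only [Set.mem_union, Set.mem_setOf_eq, Set.mem_Ioo]
      constructor
      · rintro (⟨h1, h2, _⟩ | ⟨h1, h2, _⟩) <;> exact ⟨h1, h2⟩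
      · rintro ⟨h1, h2⟩
        by_cases h : b i
        · exact Or.inl ⟨h1, h2, h⟩
        · exact Or.inr ⟨h1, h2, h⟩
    rw [← Set.ncard_union_eq hdisj finOn finZn, hset, ← Finset.coe_Ioo,
      Set.ncard_coe_finset, Int.card_Ioo]
  omega

end Aux

/-- For an edge sequence `b` with shape `γ = esShape b`, the partition `γ`
contains a box with hook length exactly `r` iff there is an index `k` with `b k = 1` and
`b (k + r) = 0`. -/
theorem stmt1 (r : ℕ) (hr : 1 ≤ r) (b : ℤ → Prop) (hb : IsEdgeSeq b) :
    HasHook (esShape b) r ↔ ∃ k : ℤ, b k ∧ ¬ b (k + (r : ℤ)) := by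
  constructor
  · rintro ⟨a, j, hj1, hj2, hhook⟩
    obtain ⟨p, hp, hzp⟩ := exists_zero hb a
    obtain ⟨q, hq, hoq⟩ := exists_one hb (j - 1)
    have hoq1 : numOnesBelow b q + 1 = j := by omega
    have hsh : esShape b a = numOnesBelow b p := by rw [← hzp]; exact shape_eq hb hp
    have hqp : q < p := (lt_iff_o hb hq p).2 (by omega)
    have hconj : conjCount (esShape b) j = numZerosAbove b q := by
      rw [← hoq1]; exact conj_eq hb hq
    have hgap := gap hb hq hp hqp
    have hzq := z_succ_le hb hqp hp
    have hop := o_succ_le hb hqp hq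
    refine ⟨q, hq, ?_⟩
    have hpq : q + (r : ℤ) = p := by
      rw [hsh, hconj, ← hzp] at hhook
      omega
    rwa [hpq]
  · rintro ⟨k, hk, hk2⟩
    set p := k + (r : ℤ) with hpdef
    have hqp : k < p := by omega
    have hzq := z_succ_le hb hqp hk2
    have hop := o_succ_le hb hqp hk
    have hsh : esShape b (numZerosAbove b p) = numOnesBelow b p := shape_eq hb hk2
    have hconj : conjCount (esShape b) (numOnesBelow b k + 1) = numZerosAbove b k :=
      conj_eq hb hk
    have hgap := gap hb hk hk2 hqp
    refine ⟨numZerosAbove b p, numOnesBelow b k + 1, by omega, by omega, ?_⟩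
    rw [hsh, hconj]
    omega
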